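/- Let f : ℕ → ℂ be governed by a minimal LRF of order d with characteristic polynomial P and companion matrix C, let L ≥ d be the window length, and let Y be an L×d matrix whose columns form a basis of the L-trajectory space of f (the span of all L-lagged vectors of f, which has dimension d). Then there exists an invertible d×d matrix P₀ such that D = P₀⁻¹ C P₀ satisfies the shift property Y̅ D = Y̲; in particular, the eigenvalues of this shift matrix D (with multiplicity) coincide with the eigenvalues of C and hence with the roots of the characteristic polynomial P of the LRF. -/

import Mathlib

open Matrix

/-- A time series `f` satisfies a linear recurrent formula (LRF) of order `t`:
there are coefficients `a 1, …, a t` with `a t ≠ 0` such that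
`f (i+t) = ∑_{k=1}^t a k * f (i+t-k)` for all `i ≥ 0`. -/
def SatisfiesLRF (f : ℕ → ℂ) (t : ℕ) : Prop :=
  ∃ a : ℕ → ℂ, a t ≠ 0 ∧ ∀ i : ℕ, f (i + t) = ∑ k ∈ Finset.Icc 1 t, a k * f (i + t - k)

/-- The matrix `A` with its last row deleted. -/
def dropLastRow {L d : ℕ} {α : Type*} (A : Matrix (Fin L) (Fin d) α) :
    Matrix (Fin (L - 1)) (Fin d) α :=
  fun i j => A ⟨i.val, by have := i.isLt; omega⟩ j

/-- The matrix `A` with its first row deleted. -/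
def dropFirstRow {L d : ℕ} {α : Type*} (A : Matrix (Fin L) (Fin d) α) :
    Matrix (Fin (L - 1)) (Fin d) α :=
  fun i j => A ⟨i.val + 1, by have := i.isLt; omega⟩ j

open Polynomial in
noncomputable def PhiC (d : ℕ) : Matrix (Fin d) (Fin d) ℂ →+* Matrix (Fin d) (Fin d) ℂ[X] :=
  RingHom.mapMatrix (Polynomial.C : ℂ →+* ℂ[X])

open Polynomial in
lemma charpoly_conj_aux {d : ℕ} (C P Q : Matrix (Fin d) (Fin d) ℂ)
    (h2 : Q * P = 1) :
    (Q * C * P).charpoly = C.charpoly := by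
  have hQP : PhiC d Q * PhiC d P = 1 := by rw [← _root_.map_mul, h2, _root_.map_one]
  have hcomm : PhiC d Q * Matrix.scalar (Fin d) X = Matrix.scalar (Fin d) X * PhiC d Q :=
    (scalar_commute (X : ℂ[X]) (Commute.all _) (PhiC d Q)).symm
  have key : charmatrix (Q * C * P) = PhiC d Q * charmatrix C * PhiC d P := by
    unfold charmatrix
    rw [Matrix.mul_sub, Matrix.sub_mul]
    congr 1
    · rw [hcomm, Matrix.mul_assoc, hQP, Matrix.mul_one]
    · show _ = PhiC d Q * PhiC d C * PhiC d P
      rw [← _root_.map_mul, ← _root_.map_mul]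
      rfl
  unfold Matrix.charpoly
  rw [key, Matrix.det_mul, Matrix.det_mul]
  have h : (PhiC d Q).det * (PhiC d P).det = 1 := by
    rw [← Matrix.det_mul, hQP, Matrix.det_one]
  calc (PhiC d Q).det * (charmatrix C).det * (PhiC d P).det
      = ((PhiC d Q).det * (PhiC d P).det) * (charmatrix C).det := by ring
    _ = (charmatrix C).det := by rw [h]; ring

/-- auxiliary: `g` satisfies the order-`d` recurrence with coefficients `a`. -/
def SatRec (d : ℕ) (a : ℕ → ℂ) (g : ℕ → ℂ) : Prop :=
  ∀ i : ℕ, g (i + d) = ∑ k ∈ Finset.Icc 1 d, a k * g (i + d - k)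

lemma satRec_congr {d a} {g h : ℕ → ℂ} (he : ∀ i, g i = h i) (hg : SatRec d a g) :
    SatRec d a h := by
  intro i
  rw [← he, hg i]
  exact Finset.sum_congr rfl fun k _ => by rw [he]

lemma satRec_shift {d a} {g : ℕ → ℂ} (hg : SatRec d a g) (c : ℕ) :
    SatRec d a (fun i => g (i + c)) := by
  intro i
  simp only
  have := hg (i + c)
  have h1 : i + c + d = i + d + c := by omega
  rw [h1] at this
  rw [this]
  refine Finset.sum_congr rfl fun k hk => ?_
  have hk' : k ≤ d := (Finset.mem_Icc.mp hk).2
  congr 2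
  omega

lemma satRec_smul {d a} {g : ℕ → ℂ} (hg : SatRec d a g) (c : ℂ) :
    SatRec d a (fun i => c * g i) := by
  intro i
  simp only [hg i, Finset.mul_sum]
  exact Finset.sum_congr rfl fun k _ => by ring

lemma satRec_zero {d a} : SatRec d a (fun _ => 0) := by
  intro i; simp

lemma satRec_add {d a} {g h : ℕ → ℂ} (hg : SatRec d a g) (hh : SatRec d a h) :
    SatRec d a (fun i => g i + h i) := by
  intro i
  simp only [hg i, hh i, ← Finset.sum_add_distrib]
  exact Finset.sum_congr rfl fun k _ => by ring

lemma satRec_sum {d a} {ι : Type*} (s : Finset ι) (g : ι → ℕ → ℂ)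
    (h : ∀ j ∈ s, SatRec d a (g j)) :
    SatRec d a (fun i => ∑ j ∈ s, g j i) := by
  induction s using Finset.cons_induction with
  | empty => exact satRec_congr (fun i => by simp) satRec_zero
  | cons x s hx ih =>
    refine satRec_congr (fun i => ?_) (satRec_add (h x (Finset.mem_cons_self x s))
      (ih fun j hj => h j (Finset.mem_cons_of_mem hj)))
    rw [Finset.sum_cons]

lemma satRec_forward {d a} {g : ℕ → ℂ} (hg : SatRec d a g)
    (h0 : ∀ i < d, g i = 0) : ∀ i, g i = 0 := by
  intro i
  induction i using Nat.strong_induction_on with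
  | _ i ih =>
    by_cases hi : i < d
    · exact h0 i hi
    · push_neg at hi
      have := hg (i - d)
      rw [Nat.sub_add_cancel hi] at this
      rw [this]
      refine Finset.sum_eq_zero fun k hk => ?_
      obtain ⟨hk1, hk2⟩ := Finset.mem_Icc.mp hk
      rw [ih (i - k) (by omega)]
      ring

lemma satRec_backward {d a} (hd : 1 ≤ d) (had : a d ≠ 0) {g : ℕ → ℂ} (hg : SatRec d a g)
    (s : ℕ) (h0 : ∀ i, s ≤ i → g i = 0) : ∀ i, g i = 0 := by
  induction s with
  | zero => exact fun i => h0 i (Nat.zero_le i)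
  | succ s ih =>
    refine ih fun i hi => ?_
    rcases Nat.lt_or_ge i (s+1) with h | h
    · -- i = s; show g i = 0
      have hrec := hg i
      have hL : g (i + d) = 0 := h0 _ (by omega)
      have hsum : ∑ k ∈ Finset.Icc 1 d, a k * g (i + d - k) = a d * g i := by
        refine Finset.sum_eq_single_of_mem d (Finset.mem_Icc.mpr ⟨hd, le_refl d⟩) ?_ |>.trans ?_
        · intro k hk hkd
          obtain ⟨hk1, hk2⟩ := Finset.mem_Icc.mp hk
          rw [h0 (i + d - k) (by omega)]
          ring
        · congr 1
          congr 1
          omega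
      rw [hL] at hrec
      rw [hsum] at hrec
      rcases mul_eq_zero.mp hrec.symm with h' | h'
      · exact absurd h' had
      · exact h'
    · exact h0 i h

lemma cols_indep (d : ℕ) (hd : 1 ≤ d) (a : ℕ → ℂ) (had : a d ≠ 0) (f : ℕ → ℂ)
    (hrec : SatRec d a f) (hmin : ∀ t : ℕ, t < d → ¬ SatisfiesLRF f t)
    (c : Fin d → ℂ) (hg : ∀ i : ℕ, ∑ j : Fin d, c j * f ((j : ℕ) + i) = 0) :
    ∀ j, c j = 0 := by
  classical
  by_contra hne
  push_neg at hne
  obtain ⟨j0, hj0⟩ := hne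
  set c' : ℕ → ℂ := fun j => if h : j < d then c ⟨j, h⟩ else 0 with hc'
  set I : Finset ℕ := (Finset.range d).filter (fun j => c' j ≠ 0) with hI
  have hIne : I.Nonempty := by
    refine ⟨j0, ?_⟩
    simp only [hI, Finset.mem_filter, Finset.mem_range]
    refine ⟨j0.isLt, ?_⟩
    simp only [hc', dif_pos j0.isLt]
    simpa using hj0
  obtain ⟨t, s, htd, htc, hsc, hst, hzero⟩ :
      ∃ t s : ℕ, t < d ∧ c' t ≠ 0 ∧ c' s ≠ 0 ∧ s ≤ t ∧
        (∀ jj : ℕ, (jj < s ∨ t < jj) → c' jj = 0) := by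
    refine ⟨I.max' hIne, I.min' hIne, ?_, ?_, ?_, ?_, ?_⟩
    · exact Finset.mem_range.mp (Finset.mem_filter.mp (I.max'_mem hIne)).1
    · exact (Finset.mem_filter.mp (I.max'_mem hIne)).2
    · exact (Finset.mem_filter.mp (I.min'_mem hIne)).2
    · exact I.min'_le _ (I.max'_mem hIne)
    · intro jj hjj
      by_cases hjd : jj < d
      · by_contra hcc
        have hmem : jj ∈ I := by
          simp only [hI, Finset.mem_filter, Finset.mem_range]
          exact ⟨hjd, hcc⟩
        rcases hjj with h | h
        · exact absurd (I.min'_le jj hmem) (by omega)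
        · exact absurd (I.le_max' jj hmem) (by omega)
      · simp only [hc', dif_neg hjd]
  obtain ⟨m, hm⟩ : ∃ m : ℕ, m = t - s := ⟨t - s, rfl⟩
  set b : ℕ → ℂ := fun k => -c' (t - k) / c' t with hb
  have hbm : b m ≠ 0 := by
    have : t - m = s := by omega
    simp only [hb, this]
    exact div_ne_zero (neg_ne_zero.mpr hsc) htc
  set h : ℕ → ℂ := fun i => f (i + m) - ∑ k ∈ Finset.Icc 1 m, b k * f (i + m - k) with hh
  have hrech : SatRec d a h := by
    have base : SatRec d a (fun i => f (i + m) +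
        ∑ k ∈ Finset.Icc 1 m, (fun k => fun i => (-b k) * f (i + (m - k))) k i) :=
      satRec_add (satRec_shift hrec m)
        (satRec_sum (Finset.Icc 1 m) _ (fun k _ => satRec_smul (satRec_shift hrec (m - k)) (-b k)))
    refine satRec_congr (fun i => ?_) base
    simp only [hh, sub_eq_add_neg, ← Finset.sum_neg_distrib]
    congr 1
    refine Finset.sum_congr rfl fun k hk => ?_
    obtain ⟨hk1, hk2⟩ := Finset.mem_Icc.mp hk
    have : i + (m - k) = i + m - k := by omega
    rw [this]
    ring
  have hvanish : ∀ i : ℕ, s ≤ i → h i = 0 := by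
    intro i hi
    obtain ⟨l, hil⟩ : ∃ l : ℕ, i = s + l := ⟨i - s, by omega⟩
    have key : c' t * h i = 0 := by
      have e1 : ∀ k ∈ Finset.Icc 1 m, c' t * (b k * f (i + m - k))
          = -(c' (t - k) * f (i + m - k)) := by
        intro k hk
        simp only [hb]
        field_simp
      calc c' t * h i
          = c' t * f (i + m) - ∑ k ∈ Finset.Icc 1 m, c' t * (b k * f (i + m - k)) := by
            simp only [hh, mul_sub, Finset.mul_sum]
        _ = c' t * f (i + m) + ∑ k ∈ Finset.Icc 1 m, c' (t - k) * f (i + m - k) := by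
            rw [Finset.sum_congr rfl e1, Finset.sum_neg_distrib, sub_neg_eq_add]
        _ = ∑ k ∈ Finset.Icc 0 m, c' (t - k) * f (i + m - k) := by
            rw [show Finset.Icc 0 m = insert 0 (Finset.Icc 1 m) from by
              ext x; simp [Finset.mem_Icc]; omega]
            rw [Finset.sum_insert (by simp)]
            simp
        _ = ∑ jj ∈ Finset.Icc s t, c' jj * f (jj + l) := by
            refine Finset.sum_bij' (fun k _ => t - k) (fun jj _ => t - jj) ?_ ?_ ?_ ?_ ?_
            · intro k hk
              obtain ⟨hk0, hk1⟩ := Finset.mem_Icc.mp hk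
              exact Finset.mem_Icc.mpr ⟨by omega, by omega⟩
            · intro jj hjj
              obtain ⟨hj0, hj1⟩ := Finset.mem_Icc.mp hjj
              exact Finset.mem_Icc.mpr ⟨by omega, by omega⟩
            · intro k hk
              obtain ⟨hk0, hk1⟩ := Finset.mem_Icc.mp hk
              omega
            · intro jj hjj
              obtain ⟨hj0, hj1⟩ := Finset.mem_Icc.mp hjj
              omega
            · intro k hk
              obtain ⟨hk0, hk1⟩ := Finset.mem_Icc.mp hk
              have : i + m - k = (t - k) + l := by omega
              rw [this]
        _ = ∑ jj ∈ Finset.range d, c' jj * f (jj + l) := by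
            refine Finset.sum_subset ?_ ?_
            · intro x hx
              obtain ⟨hx0, hx1⟩ := Finset.mem_Icc.mp hx
              exact Finset.mem_range.mpr (by omega)
            · intro x hx hx2
              have hx3 : x < s ∨ t < x := by
                rw [Finset.mem_Icc] at hx2
                omega
              rw [hzero x hx3]
              ring
        _ = ∑ j : Fin d, c j * f ((j : ℕ) + l) := by
            rw [← Fin.sum_univ_eq_sum_range (fun jj => c' jj * f (jj + l)) d]
            refine Finset.sum_congr rfl fun j _ => ?_
            simp only [hc', dif_pos j.isLt]
        _ = 0 := hg l
    rcases mul_eq_zero.mp key with h' | h'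
    · exact absurd h' htc
    · exact h'
  have hzero_all : ∀ i, h i = 0 := satRec_backward hd had hrech s hvanish
  have hm_lt : m < d := by omega
  refine hmin m hm_lt ⟨b, hbm, fun i => ?_⟩
  have := hzero_all i
  simp only [hh] at this
  exact sub_eq_zero.mp this

/-- Let `f` be governed by a minimal LRF of order `d` with companion
matrix `C` of its characteristic polynomial, let `L ≥ d`, and let `Y` be an `L×d`
matrix whose columns form a basis of the `L`-trajectory space of `f`. Then there is
an invertible matrix `P₀` such that `D = P₀⁻¹ C P₀` satisfies the shift property
`Y̅ D = Y̲`; in particular the eigenvalues of `D` (with multiplicity) coincide with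
those of `C`, i.e. with the roots of the characteristic polynomial of the LRF. -/
theorem trajectory_basis_shift_property
    (d : ℕ) (hd : 1 ≤ d) (a : ℕ → ℂ) (had : a d ≠ 0) (f : ℕ → ℂ)
    (hLRF : ∀ i : ℕ, f (i + d) = ∑ k ∈ Finset.Icc 1 d, a k * f (i + d - k))
    (hmin : ∀ t : ℕ, t < d → ¬ SatisfiesLRF f t)
    (C : Matrix (Fin d) (Fin d) ℂ)
    (hC : ∀ i j : Fin d, C i j =
      if (i : ℕ) = (j : ℕ) + 1 then 1
      else if (j : ℕ) = d - 1 then a (d - (i : ℕ)) else 0)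
    (L : ℕ) (hL : d ≤ L)
    (Y : Matrix (Fin L) (Fin d) ℂ)
    (hYli : LinearIndependent ℂ (fun j : Fin d => fun l : Fin L => Y l j))
    (hYspan : Submodule.span ℂ (Set.range (fun j : Fin d => fun l : Fin L => Y l j))
      = Submodule.span ℂ (Set.range (fun i : ℕ => fun l : Fin L => f (i + (l : ℕ))))) :
    ∃ P₀ : Matrix (Fin d) (Fin d) ℂ, IsUnit P₀ ∧
      dropLastRow Y * (P₀⁻¹ * C * P₀) = dropFirstRow Y ∧
      (P₀⁻¹ * C * P₀).charpoly = C.charpoly := by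
  classical
  have hrecf : SatRec d a f := hLRF
  set F : Matrix (Fin L) (Fin d) ℂ := Matrix.of (fun l j => f ((j : ℕ) + (l : ℕ))) with hFdef
  -- key independence of columns of F
  have key_indep : ∀ c : Fin d → ℂ,
      (∀ l : Fin L, ∑ j : Fin d, c j * f ((j : ℕ) + (l : ℕ)) = 0) → ∀ j, c j = 0 := by
    intro c hc
    have hg : ∀ i : ℕ, ∑ j : Fin d, c j * f ((j : ℕ) + i) = 0 := by
      apply satRec_forward (d := d) (a := a)
      · apply satRec_sum
        intro j _
        refine satRec_congr (g := fun i => c j * f (i + (j : ℕ))) (fun i => by rw [Nat.add_comm]) ?_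
        exact satRec_smul (satRec_shift hrecf (j : ℕ)) (c j)
      · intro i hi
        exact hc ⟨i, lt_of_lt_of_le hi hL⟩
    exact cols_indep d hd a had f hrecf hmin c hg
  -- every lagged vector is in the span of columns of F
  have hXmem : ∀ i : ℕ, (fun l : Fin L => f (i + (l : ℕ))) ∈
      Submodule.span ℂ (Set.range (fun j : Fin d => fun l : Fin L => f ((j : ℕ) + (l : ℕ)))) := by
    intro i
    induction i using Nat.strong_induction_on with
    | _ i ih =>
      by_cases hi : i < d
      · exact Submodule.subset_span ⟨⟨i, hi⟩, rfl⟩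
      · push_neg at hi
        have heq : (fun l : Fin L => f (i + (l : ℕ)))
            = ∑ k ∈ Finset.Icc 1 d, a k • (fun l : Fin L => f ((i - k) + (l : ℕ))) := by
          funext l
          rw [Finset.sum_apply]
          have hstep := hLRF ((i - d) + (l : ℕ))
          have h1 : i - d + (l : ℕ) + d = i + (l : ℕ) := by omega
          rw [h1] at hstep
          rw [hstep]
          refine Finset.sum_congr rfl fun k hk => ?_
          obtain ⟨hk1, hk2⟩ := Finset.mem_Icc.mp hk
          rw [Pi.smul_apply, smul_eq_mul]
          have h2 : i + (l : ℕ) - k = i - k + (l : ℕ) := by omega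
          rw [h2]
        rw [heq]
        refine Submodule.sum_mem _ fun k hk => Submodule.smul_mem _ _ ?_
        obtain ⟨hk1, hk2⟩ := Finset.mem_Icc.mp hk
        exact ih (i - k) (by omega)
  have hspan2 : Submodule.span ℂ (Set.range (fun i : ℕ => fun l : Fin L => f (i + (l : ℕ))))
      = Submodule.span ℂ (Set.range (fun j : Fin d => fun l : Fin L => f ((j : ℕ) + (l : ℕ)))) := by
    apply le_antisymm
    · rw [Submodule.span_le]
      rintro _ ⟨i, rfl⟩
      exact hXmem i
    · rw [Submodule.span_le]
      rintro _ ⟨j, rfl⟩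
      exact Submodule.subset_span ⟨(j : ℕ), rfl⟩
  have hYF : Submodule.span ℂ (Set.range (fun j : Fin d => fun l : Fin L => Y l j))
      = Submodule.span ℂ (Set.range (fun j : Fin d => fun l : Fin L => f ((j : ℕ) + (l : ℕ)))) :=
    hYspan.trans hspan2
  -- coefficients
  have hYc : ∀ j : Fin d, ∃ cc : Fin d → ℂ,
      ∑ i : Fin d, cc i • (fun l : Fin L => f ((i : ℕ) + (l : ℕ))) = (fun l : Fin L => Y l j) := by
    intro j
    rw [← Submodule.mem_span_range_iff_exists_fun]
    rw [← hYF]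
    exact Submodule.subset_span ⟨j, rfl⟩
  choose cY hcY using hYc
  have hFc : ∀ i : Fin d, ∃ cc : Fin d → ℂ,
      ∑ i' : Fin d, cc i' • (fun l : Fin L => Y l i') = (fun l : Fin L => f ((i : ℕ) + (l : ℕ))) := by
    intro i
    rw [← Submodule.mem_span_range_iff_exists_fun]
    rw [hYF]
    exact Submodule.subset_span ⟨i, rfl⟩
  choose cF hcF using hFc
  set P₀ : Matrix (Fin d) (Fin d) ℂ := Matrix.of (fun i j => cY j i) with hP₀def
  set Q : Matrix (Fin d) (Fin d) ℂ := Matrix.of (fun i j => cF j i) with hQdef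
  have hYFP : Y = F * P₀ := by
    ext l j
    rw [Matrix.mul_apply]
    have := congrFun (hcY j) l
    rw [Finset.sum_apply] at this
    simp only [Pi.smul_apply, smul_eq_mul] at this
    rw [← this]
    exact Finset.sum_congr rfl fun i _ => by rw [mul_comm]; rfl
  have hFYQ : F = Y * Q := by
    ext l i
    rw [Matrix.mul_apply]
    have := congrFun (hcF i) l
    rw [Finset.sum_apply] at this
    simp only [Pi.smul_apply, smul_eq_mul] at this
    rw [show F l i = f ((i : ℕ) + (l : ℕ)) from rfl, ← this]
    exact Finset.sum_congr rfl fun i' _ => by rw [mul_comm]; rfl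
  have hcancel : ∀ M N : Matrix (Fin d) (Fin d) ℂ, F * M = F * N → M = N := by
    intro M N hMN
    ext i j
    have h0 : ∀ l : Fin L, ∑ i' : Fin d, (M i' j - N i' j) * f ((i' : ℕ) + (l : ℕ)) = 0 := by
      intro l
      have hentry : (F * M) l j = (F * N) l j := by rw [hMN]
      rw [Matrix.mul_apply, Matrix.mul_apply] at hentry
      have : ∑ i' : Fin d, (M i' j - N i' j) * f ((i' : ℕ) + (l : ℕ))
          = ∑ i' : Fin d, F l i' * M i' j - ∑ i' : Fin d, F l i' * N i' j := by
        rw [← Finset.sum_sub_distrib]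
        exact Finset.sum_congr rfl fun i' _ => by
          show _ = F l i' * M i' j - F l i' * N i' j
          rw [show F l i' = f ((i' : ℕ) + (l : ℕ)) from rfl]; ring
      rw [this, hentry, sub_self]
    have := key_indep _ h0 i
    exact sub_eq_zero.mp this
  have hPQ : P₀ * Q = 1 := by
    apply hcancel
    rw [← Matrix.mul_assoc, ← hYFP, ← hFYQ, Matrix.mul_one]
  have hQP : Q * P₀ = 1 := mul_eq_one_comm.mp hPQ
  have hUnit : IsUnit P₀ := ⟨⟨P₀, Q, hPQ, hQP⟩, rfl⟩
  have hInv : P₀⁻¹ = Q := Matrix.inv_eq_right_inv hPQ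
  -- shift property of F
  have hFC : dropLastRow F * C = dropFirstRow F := by
    ext l j
    rw [Matrix.mul_apply]
    have hF1 : ∀ i : Fin d, dropLastRow F l i = f ((i : ℕ) + (l : ℕ)) := fun i => rfl
    by_cases hj : (j : ℕ) = d - 1
    · have hsum : ∀ i : Fin d, C i j = a (d - (i : ℕ)) := by
        intro i
        rw [hC i j, if_neg (by have := i.isLt; omega), if_pos hj]
      rw [Finset.sum_congr rfl fun i _ => by rw [hsum i, hF1 i]]
      rw [show dropFirstRow F l j = f ((j : ℕ) + ((l : ℕ) + 1)) from rfl]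
      have hgoal : (j : ℕ) + ((l : ℕ) + 1) = (l : ℕ) + d := by have := j.isLt; omega
      rw [hgoal, hLRF (l : ℕ)]
      refine Finset.sum_bij' (fun (i : Fin d) _ => d - (i : ℕ))
        (fun k hk => (⟨d - k, by
          obtain ⟨h1, h2⟩ := Finset.mem_Icc.mp hk; omega⟩ : Fin d)) ?_ ?_ ?_ ?_ ?_
      · intro i _
        have := i.isLt
        exact Finset.mem_Icc.mpr ⟨by omega, by omega⟩
      · intro k hk
        exact Finset.mem_univ _
      · intro i _
        have := i.isLt
        exact Fin.ext (by simp; omega)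
      · intro k hk
        obtain ⟨h1, h2⟩ := Finset.mem_Icc.mp hk
        dsimp only
        omega
      · intro i _
        have := i.isLt
        have h3 : (l : ℕ) + d - (d - (i : ℕ)) = (i : ℕ) + (l : ℕ) := by omega
        rw [h3]
        ring
    · have hjd : (j : ℕ) + 1 < d := by have := j.isLt; omega
      have hsum : ∀ i : Fin d, C i j = if (i : ℕ) = (j : ℕ) + 1 then 1 else 0 := by
        intro i
        rw [hC i j]
        by_cases h : (i : ℕ) = (j : ℕ) + 1
        · rw [if_pos h, if_pos h]
        · rw [if_neg h, if_neg h, if_neg hj]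
      rw [Finset.sum_congr rfl fun i _ => by rw [hsum i, hF1 i]]
      rw [Finset.sum_eq_single (⟨(j : ℕ) + 1, hjd⟩ : Fin d)]
      · rw [if_pos rfl, mul_one]
        show f ((j : ℕ) + 1 + (l : ℕ)) = f ((j : ℕ) + ((l : ℕ) + 1))
        congr 1
        omega
      · intro i _ hne
        rw [if_neg (fun h => hne (Fin.ext h)), mul_zero]
      · intro h
        exact absurd (Finset.mem_univ _) h
  -- conclude
  refine ⟨P₀, hUnit, ?_, ?_⟩
  · rw [hInv, hYFP]
    have hdl : dropLastRow (F * P₀) = dropLastRow F * P₀ := by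
      ext i j
      simp [dropLastRow, Matrix.mul_apply]
    have hdf : dropFirstRow (F * P₀) = dropFirstRow F * P₀ := by
      ext i j
      simp [dropFirstRow, Matrix.mul_apply]
    rw [hdl, hdf]
    calc dropLastRow F * P₀ * (Q * C * P₀)
        = dropLastRow F * (P₀ * (Q * C * P₀)) := by rw [Matrix.mul_assoc]
      _ = dropLastRow F * (C * P₀) := by
          rw [← Matrix.mul_assoc P₀, ← Matrix.mul_assoc P₀, hPQ, Matrix.one_mul]
      _ = dropLastRow F * C * P₀ := by rw [Matrix.mul_assoc]
      _ = dropFirstRow F * P₀ := by rw [hFC]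
  · rw [hInv]
    exact charpoly_conj_aux C P₀ Q hQP
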